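/- arXiv:1407.5092 — 2 statements merged into one kernel-verified Lean document; each statement's English description precedes it below -/
import Mathlib

section
/- Let m, n ≥ 1 be integers and let K_m and K_n be complete graphs on m and n vertices respectively. Then the sparing number of the corona K_m ⊙ K_n equals (1/2)[(m−1)(m−2) + mn(n−1)]. -/
open Pointwise

/-- The induced set-label on (potential) edges: `f u + f v` (sumset). -/
def edgeLabel {V : Type*} (f : V → Finset ℕ) : Sym2 V → Finset ℕ :=
  Sym2.lift ⟨fun u v => f u + f v, fun u v => add_comm (f u) (f v)⟩

/-- `f` is a weak integer additive set-indexer (weak IASI) of `G`. -/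
structure IsWeakIASI {V : Type*} (G : SimpleGraph V) (f : V → Finset ℕ) : Prop where
  inj : Function.Injective f
  nonempty : ∀ v, (f v).Nonempty
  edgeInj : Set.InjOn (edgeLabel f) G.edgeSet
  weak : ∀ ⦃u v⦄, G.Adj u v → (f u + f v).card = max (f u).card (f v).card

/-- The number of mono-indexed edges of `G` under the labeling `f`. -/
noncomputable def monoCount {V : Type*} (G : SimpleGraph V) (f : V → Finset ℕ) : ℕ :=
  {e | e ∈ G.edgeSet ∧ (edgeLabel f e).card = 1}.ncard

/-- The sparing number of `G`: the minimum number of mono-indexed edges over all weak IASIs. -/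
noncomputable def sparingNumber {V : Type*} (G : SimpleGraph V) : ℕ :=
  sInf {k | ∃ f, IsWeakIASI G f ∧ monoCount G f = k}

/-- The corona `G₁ ⊙ G₂`: one copy of `G₁`, a copy of `G₂` for each vertex `i` of `G₁`,
with `i` joined to every vertex of the `i`-th copy of `G₂`. -/
def corona {V₁ V₂ : Type*} (G₁ : SimpleGraph V₁) (G₂ : SimpleGraph V₂) :
    SimpleGraph (V₁ ⊕ V₁ × V₂) where
  Adj x y :=
    match x, y with
    | Sum.inl u, Sum.inl v => G₁.Adj u v
    | Sum.inl u, Sum.inr q => u = q.1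
    | Sum.inr p, Sum.inl v => v = p.1
    | Sum.inr p, Sum.inr q => p.1 = q.1 ∧ G₂.Adj p.2 q.2
  symm := by
    constructor
    rintro (u | ⟨i, a⟩) (v | ⟨j, b⟩) h
    · exact h.symm
    · exact h
    · exact h
    · exact ⟨h.1.symm, h.2.symm⟩
  loopless := by
    constructor
    rintro (u | ⟨i, a⟩) h
    · exact G₁.irrefl h
    · exact G₂.irrefl h.2


open Pointwise Finset

@[simp] lemma edgeLabel_mk {V : Type*} (f : V → Finset ℕ) (u v : V) :
    edgeLabel f s(u,v) = f u + f v := rfl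

lemma mono_iff {A B : Finset ℕ} (hA : A.Nonempty) (hB : B.Nonempty) :
    (A + B).card = 1 ↔ A.card = 1 ∧ B.card = 1 := by
  constructor
  · intro h
    have h1 : A.card ≤ (A + B).card := Finset.card_le_card_add_right hB
    have h2 : B.card ≤ (A + B).card := Finset.card_le_card_add_left hA
    have := hA.card_pos; have := hB.card_pos
    omega
  · rintro ⟨h1, h2⟩
    obtain ⟨a, rfl⟩ := Finset.card_eq_one.1 h1
    obtain ⟨b, rfl⟩ := Finset.card_eq_one.1 h2
    simp

lemma weak_endpoint {A B : Finset ℕ} (hA : A.Nonempty) (hB : B.Nonempty)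
    (h : (A + B).card = max A.card B.card) : A.card = 1 ∨ B.card = 1 := by
  have h1 := cauchy_davenport_add_of_linearOrder_isCancelAdd hA hB
  have := hA.card_pos; have := hB.card_pos
  omega

lemma monoCount_eq_pairs {V : Type*} [Fintype V] [DecidableEq V] (G : SimpleGraph V)
    [DecidableRel G.Adj] (f : V → Finset ℕ) (hne : ∀ v, (f v).Nonempty) :
    2 * monoCount G f
      = #(univ.filter fun p : V × V => G.Adj p.1 p.2 ∧ (f p.1).card = 1 ∧ (f p.2).card = 1) := by
  classical
  let G' : SimpleGraph V :=
    { Adj := fun u v => G.Adj u v ∧ (f u).card = 1 ∧ (f v).card = 1,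
      symm := by constructor; rintro u v ⟨h, h1, h2⟩; exact ⟨h.symm, h2, h1⟩,
      loopless := ⟨fun v h => G.irrefl h.1⟩ }
  have hmc : monoCount G f = #(G'.edgeFinset) := by
    have hset : {e | e ∈ G.edgeSet ∧ (edgeLabel f e).card = 1} = G'.edgeSet := by
      ext e
      induction e using Sym2.ind with
      | _ u v =>
        simp only [Set.mem_setOf_eq, SimpleGraph.mem_edgeSet, edgeLabel_mk]
        constructor
        · rintro ⟨h, hm⟩; exact ⟨h, (mono_iff (hne u) (hne v)).1 hm⟩
        · rintro ⟨h, h1, h2⟩; exact ⟨h, (mono_iff (hne u) (hne v)).2 ⟨h1, h2⟩⟩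
    rw [monoCount, hset, ← SimpleGraph.coe_edgeFinset, Set.ncard_coe_finset]
  rw [hmc, SimpleGraph.two_mul_card_edgeFinset]


lemma sumA {α : Type*} [Fintype α] [DecidableEq α] (σ : α → Prop) [DecidablePred σ] :
    (∑ i : α, ∑ j : α, if i ≠ j ∧ σ i ∧ σ j then 1 else 0) + #(univ.filter σ)
      = #(univ.filter σ) * #(univ.filter σ) := by
  have hdiag : (∑ i : α, ∑ j : α, if i = j ∧ σ i ∧ σ j then 1 else 0) = #(univ.filter σ) := by
    rw [card_filter]
    refine Finset.sum_congr rfl fun i _ => ?_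
    simp only [ite_and]
    rw [Finset.sum_ite_eq]
    by_cases h : σ i <;> simp [h]
  have hsq : (∑ i : α, ∑ j : α, if σ i ∧ σ j then 1 else 0)
      = #(univ.filter σ) * #(univ.filter σ) := by
    rw [card_filter, Finset.sum_mul_sum]
    refine Finset.sum_congr rfl fun i _ => Finset.sum_congr rfl fun j _ => ?_
    by_cases h1 : σ i <;> by_cases h2 : σ j <;> simp [h1, h2]
  rw [← hsq, ← hdiag, ← Finset.sum_add_distrib]
  refine Finset.sum_congr rfl fun i _ => ?_
  rw [← Finset.sum_add_distrib]
  refine Finset.sum_congr rfl fun j _ => ?_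
  by_cases h : i = j <;> by_cases h1 : σ i <;> by_cases h2 : σ j <;> simp [h, h1, h2]

lemma sumB {α β : Type*} [Fintype α] [Fintype β] [DecidableEq α] (σ : α → Prop)
    (ρ : α × β → Prop) [DecidablePred σ] [DecidablePred ρ] :
    (∑ i : α, ∑ x : α × β, if i = x.1 ∧ σ i ∧ ρ x then 1 else 0)
      = ∑ i ∈ univ.filter σ, #(univ.filter (fun a => ρ (i, a))) := by
  rw [Finset.sum_filter]
  refine Finset.sum_congr rfl fun i _ => ?_
  rw [Fintype.sum_prod_type]
  have h1 : ∀ j : α, (∑ a : β, if i = j ∧ σ i ∧ ρ (j, a) then 1 else 0)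
      = if i = j then (∑ a : β, if σ i ∧ ρ (j, a) then 1 else 0) else 0 := by
    intro j; by_cases h : i = j <;> simp [h]
  rw [Finset.sum_congr rfl fun j _ => h1 j, Finset.sum_ite_eq]
  simp only [mem_univ, if_true]
  by_cases hσ : σ i
  · simp only [hσ, true_and, if_true, card_filter]
  · simp [hσ]

lemma sumC {α β : Type*} [Fintype α] [Fintype β] [DecidableEq α] (σ : α → Prop)
    (ρ : α × β → Prop) [DecidablePred σ] [DecidablePred ρ] :
    (∑ x : α × β, ∑ i : α, if i = x.1 ∧ ρ x ∧ σ i then 1 else 0)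
      = ∑ i ∈ univ.filter σ, #(univ.filter (fun a => ρ (i, a))) := by
  rw [← sumB σ ρ, Finset.sum_comm]
  refine Finset.sum_congr rfl fun i _ => Finset.sum_congr rfl fun x _ => ?_
  by_cases h : i = x.1 <;> by_cases h1 : σ i <;> by_cases h2 : ρ x <;> simp [h, h1, h2]

lemma sumD {α β : Type*} [Fintype α] [Fintype β] [DecidableEq α] [DecidableEq β]
    (ρ : α × β → Prop) [DecidablePred ρ] :
    (∑ x : α × β, ∑ y : α × β,
        if (x.1 = y.1 ∧ x.2 ≠ y.2) ∧ ρ x ∧ ρ y then 1 else 0)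
      + ∑ i : α, #(univ.filter (fun a => ρ (i, a)))
      = ∑ i : α, #(univ.filter (fun a => ρ (i, a))) * #(univ.filter (fun a => ρ (i, a))) := by
  rw [Fintype.sum_prod_type, ← Finset.sum_add_distrib]
  refine Finset.sum_congr rfl fun i _ => ?_
  have key : (∑ a : β, ∑ y : α × β,
      if (i = y.1 ∧ a ≠ y.2) ∧ ρ (i, a) ∧ ρ y then 1 else 0)
      = ∑ a : β, ∑ b : β, if a ≠ b ∧ ρ (i, a) ∧ ρ (i, b) then 1 else 0 := by
    refine Finset.sum_congr rfl fun a _ => ?_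
    rw [Fintype.sum_prod_type]
    have h1 : ∀ j : α, (∑ b : β, if (i = j ∧ a ≠ b) ∧ ρ (i, a) ∧ ρ (j, b) then 1 else 0)
        = if i = j then (∑ b : β, if a ≠ b ∧ ρ (i, a) ∧ ρ (j, b) then 1 else 0) else 0 := by
      intro j; by_cases h : i = j <;> simp [h, and_assoc]
    rw [Finset.sum_congr rfl fun j _ => h1 j, Finset.sum_ite_eq]
    simp
  rw [key, sumA (fun a => ρ (i, a))]


lemma aux_lt {i j k l : ℕ} (hij : i ≤ j) (hkl : k ≤ l) (hik : i < k)
    (h : 3 ^ i + 3 ^ j = 3 ^ k + 3 ^ l) : False := by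
  have hpos : 0 < 3 ^ i := pow_pos (by norm_num) _
  have d1 : 3 ^ (i + 1) ∣ 3 ^ k := pow_dvd_pow 3 (by omega)
  have d2 : 3 ^ (i + 1) ∣ 3 ^ l := pow_dvd_pow 3 (by omega)
  rcases Nat.eq_or_lt_of_le hij with rfl | hij'
  · -- j = i : 2 * 3^i = 3^k + 3^l
    have hdvd : 3 ^ (i + 1) ∣ 2 * 3 ^ i := by
      rw [show 2 * 3 ^ i = 3 ^ k + 3 ^ l by omega]
      exact dvd_add d1 d2
    rw [pow_succ] at hdvd
    obtain ⟨c, hc⟩ := hdvd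
    have : 2 = 3 * c := by
      have := Nat.eq_of_mul_eq_mul_left hpos (show 3 ^ i * 2 = 3 ^ i * (3 * c) by linarith)
      omega
    omega
  · have d3 : 3 ^ (i + 1) ∣ 3 ^ j := pow_dvd_pow 3 (by omega)
    have hdvd : 3 ^ (i + 1) ∣ 3 ^ i := by
      have h4 : 3 ^ (i+1) ∣ 3 ^ k + 3 ^ l := dvd_add d1 d2
      have h5 : 3 ^ i = (3 ^ k + 3 ^ l) - 3 ^ j := by omega
      rw [h5]
      exact Nat.dvd_sub h4 d3
    rw [pow_succ] at hdvd
    obtain ⟨c, hc⟩ := hdvd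
    have : 1 = 3 * c := by
      have := Nat.eq_of_mul_eq_mul_left hpos (show 3 ^ i * 1 = 3 ^ i * (3 * c) by linarith)
      omega
    omega

lemma aux_ord {i j k l : ℕ} (hij : i ≤ j) (hkl : k ≤ l)
    (h : 3 ^ i + 3 ^ j = 3 ^ k + 3 ^ l) : i = k ∧ j = l := by
  have hik : i = k := by
    rcases lt_trichotomy i k with h' | h' | h'
    · exact absurd (aux_lt hij hkl h' h) (by simp)
    · exact h'
    · exact absurd (aux_lt hkl hij h' h.symm) (by simp)
  subst hik
  have : (3:ℕ) ^ j = 3 ^ l := by omega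
  exact ⟨rfl, Nat.pow_right_injective (by norm_num) this⟩

lemma key3 {i j k l : ℕ} (h : 3 ^ i + 3 ^ j = 3 ^ k + 3 ^ l) :
    (i = k ∧ j = l) ∨ (i = l ∧ j = k) := by
  rcases le_total i j with hij | hij <;> rcases le_total k l with hkl | hkl
  · exact Or.inl (aux_ord hij hkl h)
  · obtain ⟨h1, h2⟩ := aux_ord hij hkl (by omega)
    exact Or.inr ⟨h1, h2⟩
  · obtain ⟨h1, h2⟩ := aux_ord hij hkl (by omega)
    exact Or.inr ⟨h2, h1⟩
  · obtain ⟨h1, h2⟩ := aux_ord hij hkl (by omega)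
    exact Or.inl ⟨h2, h1⟩


def cidx (m n : ℕ) : (Fin m ⊕ Fin m × Fin n) → ℕ :=
  Sum.elim (fun i => (i : ℕ)) (fun x => m + (x.1 : ℕ) * n + (x.2 : ℕ))

def cbad {m n : ℕ} (v : Fin m ⊕ Fin m × Fin n) : Bool :=
  match v with
  | Sum.inl i => (i : ℕ) == 0
  | Sum.inr x => ((x.2 : ℕ) == 0) && ((x.1 : ℕ) != 0)

def FF (m n : ℕ) (v : Fin m ⊕ Fin m × Fin n) : Finset ℕ :=
  if cbad v then {3 ^ cidx m n v, 2 * 3 ^ cidx m n v} else {3 ^ cidx m n v}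

lemma cidx_inj (m n : ℕ) : Function.Injective (cidx m n) := by
  have key : ∀ j j' a a' : ℕ, a < n → a' < n → j * n + a = j' * n + a' → j = j' ∧ a = a' := by
    intro j j' a a' ha ha' h
    have hn : 0 < n := by omega
    have h1 : (a + j * n) / n = (a' + j' * n) / n := by rw [show a + j*n = j*n+a by ring,
      show a' + j'*n = j'*n+a' by ring, h]
    have h2 : (a + j * n) % n = (a' + j' * n) % n := by rw [show a + j*n = j*n+a by ring,
      show a' + j'*n = j'*n+a' by ring, h]
    rw [Nat.add_mul_div_right _ _ hn, Nat.add_mul_div_right _ _ hn,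
      Nat.div_eq_of_lt ha, Nat.div_eq_of_lt ha'] at h1
    rw [Nat.add_mul_mod_self_right, Nat.add_mul_mod_self_right,
      Nat.mod_eq_of_lt ha, Nat.mod_eq_of_lt ha'] at h2
    omega
  rintro (i | ⟨j, a⟩) (i' | ⟨j', a'⟩) h <;> simp only [cidx, Sum.elim_inl, Sum.elim_inr] at h
  · exact congrArg Sum.inl (Fin.ext h)
  · exact absurd h (by have := i.isLt; omega)
  · exact absurd h (by have := i'.isLt; omega)
  · obtain ⟨h1, h2⟩ := key j j' a a' a.isLt a'.isLt (by omega)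
    exact congrArg Sum.inr (Prod.ext (Fin.ext h1) (Fin.ext h2))

lemma FF_card {m n : ℕ} (v : Fin m ⊕ Fin m × Fin n) :
    (FF m n v).card = if cbad v then 2 else 1 := by
  have hpos : 0 < 3 ^ cidx m n v := pow_pos (by norm_num) _
  unfold FF
  split
  · rw [Finset.card_insert_of_notMem (by simp), Finset.card_singleton]
  · exact Finset.card_singleton _

lemma FF_nonempty {m n : ℕ} (v : Fin m ⊕ Fin m × Fin n) : (FF m n v).Nonempty := by
  unfold FF; split <;> simp

lemma FF_inj (m n : ℕ) : Function.Injective (FF m n) := by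
  intro u v h
  have hc : (FF m n u).card = (FF m n v).card := by rw [h]
  rw [FF_card, FF_card] at hc
  suffices hidx : cidx m n u = cidx m n v from cidx_inj m n hidx
  have hinj := Nat.pow_right_injective (a := 3) (by norm_num)
  rcases hu : cbad u <;> rcases hv : cbad v
  · refine hinj ?_
    show (3:ℕ) ^ cidx m n u = 3 ^ cidx m n v
    have h' : ({3 ^ cidx m n u} : Finset ℕ) = {3 ^ cidx m n v} := by
      simpa [FF, hu, hv] using h
    exact Finset.singleton_injective h'
  · rw [hu, hv] at hc; simp at hc
  · rw [hu, hv] at hc; simp at hc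
  · refine hinj ?_
    show (3:ℕ) ^ cidx m n u = 3 ^ cidx m n v
    have h' : ({3 ^ cidx m n u, 2 * 3 ^ cidx m n u} : Finset ℕ)
        = {3 ^ cidx m n v, 2 * 3 ^ cidx m n v} := by simpa [FF, hu, hv] using h
    have h1 : (3:ℕ) ^ cidx m n u = 3 ^ cidx m n v ∨
        (3:ℕ) ^ cidx m n u = 2 * 3 ^ cidx m n v := by
      have := h' ▸ (Finset.mem_insert_self (3 ^ cidx m n u) {2 * 3 ^ cidx m n u})
      simpa using this
    have h2 : (3:ℕ) ^ cidx m n v = 3 ^ cidx m n u ∨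
        (3:ℕ) ^ cidx m n v = 2 * 3 ^ cidx m n u := by
      have := h'.symm ▸ (Finset.mem_insert_self (3 ^ cidx m n v) {2 * 3 ^ cidx m n v})
      simpa using this
    have hpu : 0 < 3 ^ cidx m n u := pow_pos (by norm_num) _
    have hpv : 0 < 3 ^ cidx m n v := pow_pos (by norm_num) _
    omega


@[simp] lemma corona_adj_inl_inl {V₁ V₂ : Type*} (G₁ : SimpleGraph V₁) (G₂ : SimpleGraph V₂)
    (u v : V₁) : (corona G₁ G₂).Adj (Sum.inl u) (Sum.inl v) ↔ G₁.Adj u v := Iff.rfl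

@[simp] lemma corona_adj_inl_inr {V₁ V₂ : Type*} (G₁ : SimpleGraph V₁) (G₂ : SimpleGraph V₂)
    (u : V₁) (q : V₁ × V₂) : (corona G₁ G₂).Adj (Sum.inl u) (Sum.inr q) ↔ u = q.1 := Iff.rfl

@[simp] lemma corona_adj_inr_inl {V₁ V₂ : Type*} (G₁ : SimpleGraph V₁) (G₂ : SimpleGraph V₂)
    (p : V₁ × V₂) (v : V₁) : (corona G₁ G₂).Adj (Sum.inr p) (Sum.inl v) ↔ v = p.1 := Iff.rfl

@[simp] lemma corona_adj_inr_inr {V₁ V₂ : Type*} (G₁ : SimpleGraph V₁) (G₂ : SimpleGraph V₂)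
    (p q : V₁ × V₂) : (corona G₁ G₂).Adj (Sum.inr p) (Sum.inr q) ↔ p.1 = q.1 ∧ G₂.Adj p.2 q.2 :=
  Iff.rfl

instance coronaDecidable {V₁ V₂ : Type*} (G₁ : SimpleGraph V₁) (G₂ : SimpleGraph V₂)
    [DecidableEq V₁] [DecidableRel G₁.Adj] [DecidableRel G₂.Adj] :
    DecidableRel (corona G₁ G₂).Adj := fun x y =>
  match x, y with
  | Sum.inl u, Sum.inl v => (inferInstance : Decidable (G₁.Adj u v))
  | Sum.inl u, Sum.inr q => (inferInstance : Decidable (u = q.1))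
  | Sum.inr p, Sum.inl v => (inferInstance : Decidable (v = p.1))
  | Sum.inr p, Sum.inr q => (inferInstance : Decidable (p.1 = q.1 ∧ G₂.Adj p.2 q.2))

section Construction

variable {m n : ℕ}

lemma corona_not_both_bad {u v : Fin m ⊕ Fin m × Fin n}
    (h : (corona (⊤ : SimpleGraph (Fin m)) (⊤ : SimpleGraph (Fin n))).Adj u v) :
    ¬(cbad u = true ∧ cbad v = true) := by
  rintro ⟨hu, hv⟩
  match u, v with
  | Sum.inl i, Sum.inl j =>
    simp only [cbad, Nat.beq_eq_true_eq] at hu hv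
    rw [corona_adj_inl_inl, SimpleGraph.top_adj] at h
    exact h (Fin.ext (hu.trans hv.symm))
  | Sum.inl i, Sum.inr x =>
    simp only [cbad, Nat.beq_eq_true_eq, Bool.and_eq_true, bne_iff_ne, ne_eq,
      beq_iff_eq] at hu hv
    rw [corona_adj_inl_inr] at h
    exact hv.2 (by rw [← h]; exact hu)
  | Sum.inr x, Sum.inl i =>
    simp only [cbad, Nat.beq_eq_true_eq, Bool.and_eq_true, bne_iff_ne, ne_eq,
      beq_iff_eq] at hu hv
    rw [corona_adj_inr_inl] at h
    exact hu.2 (by rw [← h]; exact hv)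
  | Sum.inr x, Sum.inr y =>
    simp only [cbad, Bool.and_eq_true, beq_iff_eq] at hu hv
    rw [corona_adj_inr_inr, SimpleGraph.top_adj] at h
    exact h.2 (Fin.ext (hu.1.trans hv.1.symm))

lemma FF_add_gg {u v : Fin m ⊕ Fin m × Fin n} (hu : cbad u = false) (hv : cbad v = false) :
    FF m n u + FF m n v = {3 ^ cidx m n u + 3 ^ cidx m n v} := by
  simp [FF, hu, hv]

lemma FF_add_bg {u v : Fin m ⊕ Fin m × Fin n} (hu : cbad u = true) (hv : cbad v = false) :
    FF m n u + FF m n v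
      = {3 ^ cidx m n u + 3 ^ cidx m n v, 2 * 3 ^ cidx m n u + 3 ^ cidx m n v} := by
  ext z
  rw [show FF m n u = {3 ^ cidx m n u, 2 * 3 ^ cidx m n u} by simp [FF, hu],
      show FF m n v = {3 ^ cidx m n v} by simp [FF, hv]]
  simp only [Finset.mem_add, Finset.mem_insert, Finset.mem_singleton]
  constructor
  · rintro ⟨x, (rfl | rfl), y, rfl, rfl⟩
    · exact Or.inl rfl
    · exact Or.inr rfl
  · rintro (rfl | rfl)
    · exact ⟨_, Or.inl rfl, _, rfl, rfl⟩
    · exact ⟨_, Or.inr rfl, _, rfl, rfl⟩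

lemma FF_weak {u v : Fin m ⊕ Fin m × Fin n}
    (h : (corona (⊤ : SimpleGraph (Fin m)) (⊤ : SimpleGraph (Fin n))).Adj u v) :
    (FF m n u + FF m n v).card = max (FF m n u).card (FF m n v).card := by
  have hnb := corona_not_both_bad h
  have hpu : 0 < 3 ^ cidx m n u := pow_pos (by norm_num) _
  have hpv : 0 < 3 ^ cidx m n v := pow_pos (by norm_num) _
  rcases hu : cbad u <;> rcases hv : cbad v
  · rw [FF_add_gg hu hv, FF_card, FF_card, hu, hv]
    simp
  · rw [add_comm (FF m n u), FF_add_bg hv hu, FF_card, FF_card, hu, hv]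
    rw [Finset.card_insert_of_notMem (by simp), Finset.card_singleton]
    simp
  · rw [FF_add_bg hu hv, FF_card, FF_card, hu, hv]
    rw [Finset.card_insert_of_notMem (by simp), Finset.card_singleton]
    simp
  · exact absurd ⟨hu, hv⟩ hnb

lemma FF_L2 {u v u' v' : Fin m ⊕ Fin m × Fin n} (hu : cbad u = true) (hv : cbad v = false)
    (hu' : cbad u' = true) (hv' : cbad v' = false)
    (h : FF m n u + FF m n v = FF m n u' + FF m n v') : u = u' ∧ v = v' := by
  rw [FF_add_bg hu hv, FF_add_bg hu' hv'] at h
  set A := (3:ℕ) ^ cidx m n u with hA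
  set B := (3:ℕ) ^ cidx m n v with hB
  set A' := (3:ℕ) ^ cidx m n u' with hA'
  set B' := (3:ℕ) ^ cidx m n v' with hB'
  have hpA : 0 < A := pow_pos (by norm_num) _
  have hpA' : 0 < A' := pow_pos (by norm_num) _
  have h1 : A + B = A' + B' ∨ A + B = 2 * A' + B' := by
    have := h ▸ (Finset.mem_insert_self (A + B) {2 * A + B})
    simpa using this
  have h2 : 2 * A + B = A' + B' ∨ 2 * A + B = 2 * A' + B' := by
    have hm : 2 * A + B ∈ ({A + B, 2 * A + B} : Finset ℕ) := by simp
    rw [h] at hm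
    simpa using hm
  have hAA : A = A' ∧ B = B' := by omega
  have e1 : cidx m n u = cidx m n u' := Nat.pow_right_injective (a := 3) (by norm_num) hAA.1
  have e2 : cidx m n v = cidx m n v' := Nat.pow_right_injective (a := 3) (by norm_num) hAA.2
  exact ⟨cidx_inj m n e1, cidx_inj m n e2⟩

lemma FF_L1 {u v u' v' : Fin m ⊕ Fin m × Fin n} (hu : cbad u = false) (hv : cbad v = false)
    (hu' : cbad u' = false) (hv' : cbad v' = false) (huv : u ≠ v) (huv' : u' ≠ v')
    (h : FF m n u + FF m n v = FF m n u' + FF m n v') :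
    (u = u' ∧ v = v') ∨ (u = v' ∧ v = u') := by
  rw [FF_add_gg hu hv, FF_add_gg hu' hv'] at h
  have h' : 3 ^ cidx m n u + 3 ^ cidx m n v = 3 ^ cidx m n u' + 3 ^ cidx m n v' :=
    Finset.singleton_injective h
  rcases key3 h' with ⟨h1, h2⟩ | ⟨h1, h2⟩
  · exact Or.inl ⟨cidx_inj m n h1, cidx_inj m n h2⟩
  · exact Or.inr ⟨cidx_inj m n h1, cidx_inj m n h2⟩

end Construction

section Construction2

variable {m n : ℕ}

lemma FF_sum_card_one_iff {u v : Fin m ⊕ Fin m × Fin n} :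
    (FF m n u + FF m n v).card = 1 ↔ cbad u = false ∧ cbad v = false := by
  rw [mono_iff (FF_nonempty u) (FF_nonempty v), FF_card, FF_card]
  rcases hu : cbad u <;> rcases hv : cbad v <;> simp

lemma FF_main {u v u' v' : Fin m ⊕ Fin m × Fin n}
    (huv : (corona (⊤ : SimpleGraph (Fin m)) (⊤ : SimpleGraph (Fin n))).Adj u v)
    (huv' : (corona (⊤ : SimpleGraph (Fin m)) (⊤ : SimpleGraph (Fin n))).Adj u' v')
    (h : FF m n u + FF m n v = FF m n u' + FF m n v') : s(u, v) = s(u', v') := by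
  have nb := corona_not_both_bad huv
  have nb' := corona_not_both_bad huv'
  have hne : u ≠ v := huv.ne
  have hne' : u' ≠ v' := huv'.ne
  rw [Sym2.eq_iff]
  have hc : (FF m n u + FF m n v).card = (FF m n u' + FF m n v').card := by rw [h]
  rcases hu : cbad u <;> rcases hv : cbad v <;> rcases hu' : cbad u' <;> rcases hv' : cbad v'
  -- ffff
  · exact FF_L1 hu hv hu' hv' hne hne' h
  -- fff t
  · have h1 : (FF m n u + FF m n v).card = 1 := FF_sum_card_one_iff.2 ⟨hu, hv⟩
    rw [hc, FF_sum_card_one_iff] at h1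
    rw [h1.2] at hv'; exact absurd hv' (by simp)
  -- ff tf
  · have h1 : (FF m n u + FF m n v).card = 1 := FF_sum_card_one_iff.2 ⟨hu, hv⟩
    rw [hc, FF_sum_card_one_iff] at h1
    rw [h1.1] at hu'; exact absurd hu' (by simp)
  -- ff tt
  · exact absurd ⟨hu', hv'⟩ nb'
  -- ft ff
  · have h1 : (FF m n u' + FF m n v').card = 1 := FF_sum_card_one_iff.2 ⟨hu', hv'⟩
    rw [← hc, FF_sum_card_one_iff] at h1
    rw [h1.2] at hv; exact absurd hv (by simp)
  -- ft ft
  · have h' : FF m n v + FF m n u = FF m n v' + FF m n u' := by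
      rw [add_comm (FF m n v), add_comm (FF m n v')]; exact h
    obtain ⟨e1, e2⟩ := FF_L2 hv hu hv' hu' h'
    exact Or.inl ⟨e2, e1⟩
  -- ft tf
  · have h' : FF m n v + FF m n u = FF m n u' + FF m n v' := by
      rw [add_comm (FF m n v)]; exact h
    obtain ⟨e1, e2⟩ := FF_L2 hv hu hu' hv' h'
    exact Or.inr ⟨e2, e1⟩
  -- ft tt
  · exact absurd ⟨hu', hv'⟩ nb'
  -- tf ff
  · have h1 : (FF m n u' + FF m n v').card = 1 := FF_sum_card_one_iff.2 ⟨hu', hv'⟩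
    rw [← hc, FF_sum_card_one_iff] at h1
    rw [h1.1] at hu; exact absurd hu (by simp)
  -- tf ft
  · have h' : FF m n u + FF m n v = FF m n v' + FF m n u' := by
      rw [add_comm (FF m n v')]; exact h
    obtain ⟨e1, e2⟩ := FF_L2 hu hv hv' hu' h'
    exact Or.inr ⟨e1, e2⟩
  -- tf tf
  · obtain ⟨e1, e2⟩ := FF_L2 hu hv hu' hv' h
    exact Or.inl ⟨e1, e2⟩
  -- tf tt
  · exact absurd ⟨hu', hv'⟩ nb'
  -- tt *
  · exact absurd ⟨hu, hv⟩ nb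
  · exact absurd ⟨hu, hv⟩ nb
  · exact absurd ⟨hu, hv⟩ nb
  · exact absurd ⟨hu, hv⟩ nb

lemma FF_isWeakIASI (m n : ℕ) :
    IsWeakIASI (corona (⊤ : SimpleGraph (Fin m)) (⊤ : SimpleGraph (Fin n))) (FF m n) := by
  refine ⟨FF_inj m n, FF_nonempty, ?_, fun u v h => FF_weak h⟩
  intro e1 he1 e2 he2 h
  obtain ⟨⟨u, v⟩, rfl⟩ := e1.exists_rep
  obtain ⟨⟨u', v'⟩, rfl⟩ := e2.exists_rep
  exact FF_main he1 he2 h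

end Construction2

lemma master (m n : ℕ) (f : Fin m ⊕ Fin m × Fin n → Finset ℕ) (hne : ∀ v, (f v).Nonempty) :
    2 * monoCount (corona (⊤ : SimpleGraph (Fin m)) (⊤ : SimpleGraph (Fin n))) f
      + #(univ.filter fun i : Fin m => (f (Sum.inl i)).card = 1)
      + ∑ i : Fin m, #(univ.filter fun a : Fin n => (f (Sum.inr (i, a))).card = 1)
    = #(univ.filter fun i : Fin m => (f (Sum.inl i)).card = 1)
        * #(univ.filter fun i : Fin m => (f (Sum.inl i)).card = 1)
      + 2 * ∑ i ∈ univ.filter (fun i : Fin m => (f (Sum.inl i)).card = 1),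
          #(univ.filter fun a : Fin n => (f (Sum.inr (i, a))).card = 1)
      + ∑ i : Fin m, #(univ.filter fun a : Fin n => (f (Sum.inr (i, a))).card = 1)
          * #(univ.filter fun a : Fin n => (f (Sum.inr (i, a))).card = 1) := by
  classical
  have eA := sumA (fun i : Fin m => (f (Sum.inl i)).card = 1)
  have eB := sumB (fun i : Fin m => (f (Sum.inl i)).card = 1)
      (fun x : Fin m × Fin n => (f (Sum.inr x)).card = 1)
  have eC := sumC (fun i : Fin m => (f (Sum.inl i)).card = 1)
      (fun x : Fin m × Fin n => (f (Sum.inr x)).card = 1)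
  have eD := sumD (fun x : Fin m × Fin n => (f (Sum.inr x)).card = 1) (β := Fin n)
  have expand : 2 * monoCount (corona (⊤ : SimpleGraph (Fin m)) (⊤ : SimpleGraph (Fin n))) f
      = (((∑ i : Fin m, ∑ j : Fin m,
            if i ≠ j ∧ (f (Sum.inl i)).card = 1 ∧ (f (Sum.inl j)).card = 1 then 1 else 0)
        + (∑ x : Fin m × Fin n, ∑ i : Fin m,
            if i = x.1 ∧ (f (Sum.inr x)).card = 1 ∧ (f (Sum.inl i)).card = 1 then 1 else 0))
        + (∑ i : Fin m, ∑ x : Fin m × Fin n,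
            if i = x.1 ∧ (f (Sum.inl i)).card = 1 ∧ (f (Sum.inr x)).card = 1 then 1 else 0))
        + (∑ x : Fin m × Fin n, ∑ y : Fin m × Fin n,
            if (x.1 = y.1 ∧ x.2 ≠ y.2) ∧ (f (Sum.inr x)).card = 1 ∧ (f (Sum.inr y)).card = 1
              then 1 else 0) := by
    rw [monoCount_eq_pairs _ f hne, card_filter]
    rw [Fintype.sum_prod_type]
    simp only [Fintype.sum_sum_type, Finset.sum_add_distrib]
    simp only [corona_adj_inl_inl, corona_adj_inl_inr, corona_adj_inr_inl, corona_adj_inr_inr,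
      SimpleGraph.top_adj]
    ring
  rw [expand]
  linarith [eA, eB, eC, eD]

lemma ppart_arith {m p : ℕ} (h : m - 1 ≤ p) : p + (m - 1) * (m - 2) ≤ p * p := by
  rcases Nat.eq_zero_or_pos p with h0 | hpos
  · have h1 : m - 1 = 0 := by omega
    rw [h0, h1]
    simp
  · obtain ⟨p', rfl⟩ : ∃ p', p = p' + 1 := ⟨p - 1, by omega⟩
    have h1 : (m - 1) * (m - 2) ≤ (p' + 1) * p' := Nat.mul_le_mul (by omega) (by omega)
    have h2 : (p' + 1) * (p' + 1) = (p' + 1) * p' + (p' + 1) := by ring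
    omega

lemma qpart_arith {n q : ℕ} (h1 : n - 1 ≤ q) : n * (n - 1) + q ≤ q * q + 2 * q := by
  have ha : (n - 1) * n ≤ q * (q + 1) := Nat.mul_le_mul h1 (by omega)
  have hb : q * (q + 1) = q * q + q := by ring
  have hc : n * (n - 1) = (n - 1) * n := mul_comm _ _
  omega

lemma qpart_arith' {n q : ℕ} (hn : 1 ≤ n) (h : q = n) : n * (n - 1) + q ≤ q * q := by
  subst h
  obtain ⟨n', rfl⟩ : ∃ n', q = n' + 1 := ⟨q - 1, by omega⟩
  simp only [Nat.add_sub_cancel]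
  nlinarith

section LowerBound

variable {m n : ℕ}

lemma lower_bound (hm : 1 ≤ m) (hn : 1 ≤ n) (f : Fin m ⊕ Fin m × Fin n → Finset ℕ)
    (hf : IsWeakIASI (corona (⊤ : SimpleGraph (Fin m)) (⊤ : SimpleGraph (Fin n))) f) :
    (m - 1) * (m - 2) + m * n * (n - 1)
      ≤ 2 * monoCount (corona (⊤ : SimpleGraph (Fin m)) (⊤ : SimpleGraph (Fin n))) f := by
  classical
  have hor : ∀ u v, (corona (⊤ : SimpleGraph (Fin m)) (⊤ : SimpleGraph (Fin n))).Adj u v →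
      (f u).card = 1 ∨ (f v).card = 1 :=
    fun u v h => weak_endpoint (hf.nonempty u) (hf.nonempty v) (hf.weak h)
  have hmain := master m n f hf.nonempty
  -- p ≥ m - 1
  have hp1 : m - 1 ≤ #(univ.filter fun i : Fin m => (f (Sum.inl i)).card = 1) := by
    have hneg : #(univ.filter fun i : Fin m => ¬ (f (Sum.inl i)).card = 1) ≤ 1 := by
      rw [Finset.card_le_one]
      intro i hi j hj
      rw [Finset.mem_filter] at hi hj
      by_contra hij
      rcases hor (Sum.inl i) (Sum.inl j)
          (by rw [corona_adj_inl_inl, SimpleGraph.top_adj]; exact hij) with h | h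
      · exact hi.2 h
      · exact hj.2 h
    have := Finset.card_filter_add_card_filter_not
      (s := (univ : Finset (Fin m))) (p := fun i : Fin m => (f (Sum.inl i)).card = 1)
    rw [Finset.card_univ, Fintype.card_fin] at this
    omega
  -- q i ≥ n - 1
  have hq1 : ∀ i : Fin m,
      n - 1 ≤ #(univ.filter fun a : Fin n => (f (Sum.inr (i, a))).card = 1) := by
    intro i
    have hneg : #(univ.filter fun a : Fin n => ¬ (f (Sum.inr (i, a))).card = 1) ≤ 1 := by
      rw [Finset.card_le_one]
      intro a ha b hb
      rw [Finset.mem_filter] at ha hb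
      by_contra hab
      rcases hor (Sum.inr (i, a)) (Sum.inr (i, b))
          (by rw [corona_adj_inr_inr]
              exact ⟨rfl, by rw [SimpleGraph.top_adj]; exact hab⟩) with h | h
      · exact ha.2 h
      · exact hb.2 h
    have := Finset.card_filter_add_card_filter_not
      (s := (univ : Finset (Fin n))) (p := fun a : Fin n => (f (Sum.inr (i, a))).card = 1)
    rw [Finset.card_univ, Fintype.card_fin] at this
    omega
  have hq3 : ∀ i : Fin m, ¬ ((f (Sum.inl i)).card = 1) →
      #(univ.filter fun a : Fin n => (f (Sum.inr (i, a))).card = 1) = n := by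
    intro i hi
    have h1 : (univ.filter fun a : Fin n => (f (Sum.inr (i, a))).card = 1) = univ := by
      apply Finset.filter_true_of_mem
      intro a _
      rcases hor (Sum.inl i) (Sum.inr (i, a)) (by rw [corona_adj_inl_inr]) with h | h
      · exact absurd h hi
      · exact h
    rw [h1, Finset.card_univ, Fintype.card_fin]
  -- per-i inequality
  have hper : ∀ i : Fin m,
      n * (n - 1) + #(univ.filter fun a : Fin n => (f (Sum.inr (i, a))).card = 1)
      ≤ #(univ.filter fun a : Fin n => (f (Sum.inr (i, a))).card = 1)
          * #(univ.filter fun a : Fin n => (f (Sum.inr (i, a))).card = 1)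
        + (if (f (Sum.inl i)).card = 1
            then 2 * #(univ.filter fun a : Fin n => (f (Sum.inr (i, a))).card = 1) else 0) := by
    intro i
    by_cases hσ : (f (Sum.inl i)).card = 1
    · rw [if_pos hσ]
      exact qpart_arith (hq1 i)
    · rw [if_neg hσ]
      have := qpart_arith' hn (hq3 i hσ)
      omega
  -- sum the per-i inequality
  have hsum : m * (n * (n - 1))
        + (∑ i : Fin m, #(univ.filter fun a : Fin n => (f (Sum.inr (i, a))).card = 1))
      ≤ (∑ i : Fin m, #(univ.filter fun a : Fin n => (f (Sum.inr (i, a))).card = 1)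
            * #(univ.filter fun a : Fin n => (f (Sum.inr (i, a))).card = 1))
        + 2 * ∑ i ∈ univ.filter (fun i : Fin m => (f (Sum.inl i)).card = 1),
            #(univ.filter fun a : Fin n => (f (Sum.inr (i, a))).card = 1) := by
    have h0 := Finset.sum_le_sum (s := (univ : Finset (Fin m))) (fun i _ => hper i)
    rw [Finset.sum_add_distrib, Finset.sum_add_distrib, Finset.sum_const, Finset.card_univ,
      Fintype.card_fin, smul_eq_mul] at h0
    have h2 : (∑ i : Fin m, if (f (Sum.inl i)).card = 1
          then 2 * #(univ.filter fun a : Fin n => (f (Sum.inr (i, a))).card = 1) else 0)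
        = 2 * ∑ i ∈ univ.filter (fun i : Fin m => (f (Sum.inl i)).card = 1),
            #(univ.filter fun a : Fin n => (f (Sum.inr (i, a))).card = 1) := by
      rw [Finset.mul_sum, Finset.sum_filter]
    omega
  have hppart := ppart_arith hp1
  have hassoc : m * n * (n - 1) = m * (n * (n - 1)) := mul_assoc _ _ _
  linarith [hmain, hsum, hppart]

end LowerBound

lemma card_fin_zero {M : ℕ} (hM : 1 ≤ M) :
    #(univ.filter fun i : Fin M => (i : ℕ) = 0) = 1 := by
  rw [Finset.card_eq_one]
  refine ⟨⟨0, hM⟩, ?_⟩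
  ext j
  simp [Finset.mem_filter, Fin.ext_iff]

lemma card_fin_nonzero {M : ℕ} (hM : 1 ≤ M) :
    #(univ.filter fun i : Fin M => ¬ (i : ℕ) = 0) = M - 1 := by
  have h := Finset.card_filter_add_card_filter_not
    (s := (univ : Finset (Fin M))) (p := fun i : Fin M => (i : ℕ) = 0)
  rw [Finset.card_univ, Fintype.card_fin, card_fin_zero hM] at h
  omega

lemma sum_fin_ite {M : ℕ} (hM : 1 ≤ M) (c0 c1 : ℕ) :
    (∑ i : Fin M, if (i : ℕ) = 0 then c0 else c1) = c0 + (M - 1) * c1 := by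
  rw [Finset.sum_ite, Finset.sum_const, Finset.sum_const, smul_eq_mul, smul_eq_mul,
    card_fin_zero hM, card_fin_nonzero hM]
  ring

section UpperBound

variable {m n : ℕ}

lemma FF_sigma (i : Fin m) : (FF m n (Sum.inl i)).card = 1 ↔ ¬ (i : ℕ) = 0 := by
  rw [FF_card]
  by_cases h : (i : ℕ) = 0 <;> simp [cbad, h]

lemma FF_tau (i : Fin m) (a : Fin n) :
    (FF m n (Sum.inr (i, a))).card = 1 ↔ ¬ ((a : ℕ) = 0 ∧ ¬ (i : ℕ) = 0) := by
  rw [FF_card]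
  by_cases h1 : (a : ℕ) = 0 <;> by_cases h2 : (i : ℕ) = 0 <;> simp [cbad, h1, h2]

lemma FF_p (hm : 1 ≤ m) :
    #(univ.filter fun i : Fin m => (FF m n (Sum.inl i)).card = 1) = m - 1 := by
  rw [Finset.filter_congr (fun i _ => FF_sigma i), card_fin_nonzero hm]

lemma FF_q0 (i : Fin m) (hi : (i : ℕ) = 0) :
    #(univ.filter fun a : Fin n => (FF m n (Sum.inr (i, a))).card = 1) = n := by
  rw [Finset.filter_true_of_mem (fun a _ => (FF_tau i a).2 (by simp [hi])),
    Finset.card_univ, Fintype.card_fin]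

lemma FF_q1 (hn : 1 ≤ n) (i : Fin m) (hi : ¬ (i : ℕ) = 0) :
    #(univ.filter fun a : Fin n => (FF m n (Sum.inr (i, a))).card = 1) = n - 1 := by
  have h1 : (univ.filter fun a : Fin n => (FF m n (Sum.inr (i, a))).card = 1)
      = univ.filter (fun a : Fin n => ¬ (a : ℕ) = 0) :=
    Finset.filter_congr (fun a _ => by rw [FF_tau i a]; simp [hi])
  rw [h1, card_fin_nonzero hn]

lemma FF_q (hn : 1 ≤ n) (i : Fin m) :
    #(univ.filter fun a : Fin n => (FF m n (Sum.inr (i, a))).card = 1)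
      = if (i : ℕ) = 0 then n else n - 1 := by
  by_cases hi : (i : ℕ) = 0
  · rw [if_pos hi, FF_q0 i hi]
  · rw [if_neg hi, FF_q1 hn i hi]

lemma FF_W (hm : 1 ≤ m) (hn : 1 ≤ n) :
    (∑ i ∈ univ.filter (fun i : Fin m => (FF m n (Sum.inl i)).card = 1),
      #(univ.filter fun a : Fin n => (FF m n (Sum.inr (i, a))).card = 1))
    = (m - 1) * (n - 1) := by
  have h1 : (∑ i ∈ univ.filter (fun i : Fin m => (FF m n (Sum.inl i)).card = 1),
      #(univ.filter fun a : Fin n => (FF m n (Sum.inr (i, a))).card = 1))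
      = ∑ _i ∈ univ.filter (fun i : Fin m => (FF m n (Sum.inl i)).card = 1), (n - 1) :=
    Finset.sum_congr rfl (fun i hi => by
      rw [Finset.mem_filter] at hi
      exact FF_q1 hn i ((FF_sigma i).1 hi.2))
  rw [h1, Finset.sum_const, smul_eq_mul, FF_p hm]

lemma FF_Q1 (hm : 1 ≤ m) (hn : 1 ≤ n) :
    (∑ i : Fin m, #(univ.filter fun a : Fin n => (FF m n (Sum.inr (i, a))).card = 1))
      = n + (m - 1) * (n - 1) := by
  rw [Finset.sum_congr rfl (fun i _ => FF_q hn i), sum_fin_ite hm]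

lemma FF_Q2 (hm : 1 ≤ m) (hn : 1 ≤ n) :
    (∑ i : Fin m, #(univ.filter fun a : Fin n => (FF m n (Sum.inr (i, a))).card = 1)
        * #(univ.filter fun a : Fin n => (FF m n (Sum.inr (i, a))).card = 1))
      = n * n + (m - 1) * ((n - 1) * (n - 1)) := by
  have h : ∀ i : Fin m,
      #(univ.filter fun a : Fin n => (FF m n (Sum.inr (i, a))).card = 1)
        * #(univ.filter fun a : Fin n => (FF m n (Sum.inr (i, a))).card = 1)
      = if (i : ℕ) = 0 then n * n else (n - 1) * (n - 1) := by
    intro i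
    rw [FF_q hn i]
    by_cases hi : (i : ℕ) = 0 <;> simp [hi]
  rw [Finset.sum_congr rfl (fun i _ => h i), sum_fin_ite hm]

lemma FF_count (hm : 1 ≤ m) (hn : 1 ≤ n) :
    2 * monoCount (corona (⊤ : SimpleGraph (Fin m)) (⊤ : SimpleGraph (Fin n))) (FF m n)
      = (m - 1) * (m - 2) + m * n * (n - 1) := by
  have hmain := master m n (FF m n) FF_nonempty
  rw [FF_p hm, FF_W hm hn, FF_Q1 hm hn, FF_Q2 hm hn] at hmain
  obtain ⟨m', rfl⟩ : ∃ m', m = m' + 1 := ⟨m - 1, by omega⟩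
  obtain ⟨n', rfl⟩ : ∃ n', n = n' + 1 := ⟨n - 1, by omega⟩
  simp only [Nat.add_sub_cancel] at hmain ⊢
  rcases m' with _ | m''
  · simp only [Nat.zero_add] at hmain ⊢
    zify at hmain ⊢
    linear_combination hmain
  · have h2 : m'' + 1 + 1 - 2 = m'' := by omega
    rw [h2]
    zify at hmain ⊢
    linear_combination hmain

end UpperBound


/-- Sparing number of the corona `K_m ⊙ K_n` of two complete graphs. -/
theorem sparing_corona_complete_complete (m n : ℕ) (hm : 1 ≤ m) (hn : 1 ≤ n) :
    2 * sparingNumber (corona (⊤ : SimpleGraph (Fin m)) (⊤ : SimpleGraph (Fin n)))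
      = (m - 1) * (m - 2) + m * n * (n - 1) := by
  have hW := FF_isWeakIASI m n
  have hmem : monoCount (corona (⊤ : SimpleGraph (Fin m)) (⊤ : SimpleGraph (Fin n))) (FF m n)
      ∈ {k | ∃ f, IsWeakIASI (corona (⊤ : SimpleGraph (Fin m)) (⊤ : SimpleGraph (Fin n))) f ∧
          monoCount (corona (⊤ : SimpleGraph (Fin m)) (⊤ : SimpleGraph (Fin n))) f = k} :=
    ⟨FF m n, hW, rfl⟩
  have hcount := FF_count hm hn
  have h1 : sparingNumber (corona (⊤ : SimpleGraph (Fin m)) (⊤ : SimpleGraph (Fin n)))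
      ≤ monoCount (corona (⊤ : SimpleGraph (Fin m)) (⊤ : SimpleGraph (Fin n))) (FF m n) :=
    Nat.sInf_le hmem
  have h2 : monoCount (corona (⊤ : SimpleGraph (Fin m)) (⊤ : SimpleGraph (Fin n))) (FF m n)
      ≤ sparingNumber (corona (⊤ : SimpleGraph (Fin m)) (⊤ : SimpleGraph (Fin n))) := by
    apply le_csInf ⟨_, hmem⟩
    rintro k ⟨f, hf, rfl⟩
    have hlb := lower_bound hm hn f hf
    linarith
  have heq : sparingNumber (corona (⊤ : SimpleGraph (Fin m)) (⊤ : SimpleGraph (Fin n)))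
      = monoCount (corona (⊤ : SimpleGraph (Fin m)) (⊤ : SimpleGraph (Fin n))) (FF m n) :=
    le_antisymm h1 h2
  rw [heq, hcount]
end

section
/- Let m, n ≥ 1 be integers, let P_m be the path of length m (with m+1 vertices) and K_n the complete graph on n vertices. Then the sparing number of the corona P_m ⊙ K_n equals (1/2)n(n−1)(m+1). -/
open Pointwise

/-! ### Auxiliary arithmetic lemmas -/

lemma SP.card_add_left {A B : Finset ℕ} (hA : A.card = 1) : (A + B).card = B.card := by
  obtain ⟨a, rfl⟩ := Finset.card_eq_one.mp hA
  exact Finset.card_singleton_add a B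

lemma SP.card_add_right {A B : Finset ℕ} (hB : B.card = 1) : (A + B).card = A.card := by
  obtain ⟨b, rfl⟩ := Finset.card_eq_one.mp hB
  exact Finset.card_add_singleton A b

lemma SP.mono_of_mono {A B : Finset ℕ} (hA : A.Nonempty) (hB : B.Nonempty)
    (h : (A + B).card = 1) : A.card = 1 ∧ B.card = 1 := by
  have hcd := cauchy_davenport_add_of_linearOrder_isCancelAdd hA hB
  have h1 := hA.card_pos
  have h2 := hB.card_pos
  omega

/-- On an edge of a weak IASI, one of the endpoints is mono-indexed. -/
lemma SP.one_singleton {V : Type*} {G : SimpleGraph V} {f : V → Finset ℕ}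
    (hf : IsWeakIASI G f) {u v : V} (h : G.Adj u v) :
    (f u).card = 1 ∨ (f v).card = 1 := by
  have hcd := cauchy_davenport_add_of_linearOrder_isCancelAdd (hf.nonempty u) (hf.nonempty v)
  have hw := hf.weak h
  have h1 := (hf.nonempty u).card_pos
  have h2 := (hf.nonempty v).card_pos
  rcases le_total (f u).card (f v).card with hc | hc
  · rw [Nat.max_eq_right hc] at hw; omega
  · rw [Nat.max_eq_left hc] at hw; omega

lemma SP.pow4_lt {a b : ℕ} (h : a < b) : (4:ℕ)^a < 4^b :=
  Nat.pow_lt_pow_right (by norm_num) h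

lemma SP.pow4_sidon_lt {a b c d : ℕ} (hab : a < b) (hcd : c < d)
    (h : (4:ℕ)^a + 4^b = 4^c + 4^d) : a = c ∧ b = d := by
  have hbd : b = d := by
    have l1 : (4:ℕ)^b < 4^a + 4^b := by
      have := Nat.pow_pos (n := a) (show 0 < 4 by norm_num)
      omega
    have u1 : (4:ℕ)^a + 4^b < 4^(b+1) := by
      have h1 : (4:ℕ)^a < 4^b := SP.pow4_lt hab
      have h2 : (4:ℕ)^(b+1) = 4 * 4^b := by ring
      omega
    have l2 : (4:ℕ)^d < 4^c + 4^d := by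
      have := Nat.pow_pos (n := c) (show 0 < 4 by norm_num)
      omega
    have u2 : (4:ℕ)^c + 4^d < 4^(d+1) := by
      have h1 : (4:ℕ)^c < 4^d := SP.pow4_lt hcd
      have h2 : (4:ℕ)^(d+1) = 4 * 4^d := by ring
      omega
    have hb1 : b < d + 1 := by
      have : (4:ℕ)^b < 4^(d+1) := by omega
      exact (Nat.pow_lt_pow_iff_right (by norm_num)).mp this
    have hb2 : d < b + 1 := by
      have : (4:ℕ)^d < 4^(b+1) := by omega
      exact (Nat.pow_lt_pow_iff_right (by norm_num)).mp this
    omega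
  subst hbd
  refine ⟨?_, rfl⟩
  have : (4:ℕ)^a = 4^c := by omega
  exact Nat.pow_right_injective (by norm_num) this

lemma SP.pow4_sidon {a b c d : ℕ} (hab : a ≠ b) (hcd : c ≠ d)
    (h : (4:ℕ)^a + 4^b = 4^c + 4^d) : (a = c ∧ b = d) ∨ (a = d ∧ b = c) := by
  rcases lt_or_gt_of_ne hab with h1 | h1 <;> rcases lt_or_gt_of_ne hcd with h2 | h2
  · exact Or.inl (SP.pow4_sidon_lt h1 h2 h)
  · obtain ⟨e1, e2⟩ := SP.pow4_sidon_lt h1 h2 (by omega)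
    exact Or.inr ⟨e1, e2⟩
  · obtain ⟨e1, e2⟩ := SP.pow4_sidon_lt h1 h2 (by omega)
    exact Or.inr ⟨e2, e1⟩
  · obtain ⟨e1, e2⟩ := SP.pow4_sidon_lt h1 h2 (by omega)
    exact Or.inl ⟨e2, e1⟩

/-! ### Doubling the mono count -/

/-- The spanning subgraph of mono-indexed edges. -/
def SP.monoGraph {V : Type*} (G : SimpleGraph V) (f : V → Finset ℕ) : SimpleGraph V where
  Adj u v := G.Adj u v ∧ (f u + f v).card = 1
  symm := by
    constructor
    intro u v ⟨h1, h2⟩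
    exact ⟨h1.symm, by rwa [add_comm (f v)]⟩
  loopless := ⟨fun v h => G.irrefl h.1⟩

lemma SP.two_mul_monoCount {V : Type*} [Fintype V] [DecidableEq V]
    (G : SimpleGraph V) (f : V → Finset ℕ) :
    2 * monoCount G f
      = {p : V × V | G.Adj p.1 p.2 ∧ (f p.1 + f p.2).card = 1}.ncard := by
  classical
  have hset : {e | e ∈ G.edgeSet ∧ (edgeLabel f e).card = 1} = (SP.monoGraph G f).edgeSet := by
    ext e
    induction e using Sym2.ind with
    | _ u v =>
      simp only [Set.mem_setOf_eq, SimpleGraph.mem_edgeSet, edgeLabel, Sym2.lift_mk]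
      rfl
  rw [monoCount, hset, ← SimpleGraph.coe_edgeFinset, Set.ncard_coe_finset,
    SimpleGraph.two_mul_card_edgeFinset, ← Set.ncard_coe_finset]
  congr 1
  ext ⟨u, v⟩
  simp only [Finset.coe_filter, Finset.mem_coe, Finset.mem_filter, Finset.mem_univ, true_and, Set.mem_setOf_eq]
  exact Iff.rfl

/-! ### Setup for the corona of a path and a complete graph -/

namespace SP

variable (m n : ℕ)

abbrev Vt := Fin (m+1) ⊕ Fin (m+1) × Fin n

def Gc : SimpleGraph (Vt m n) := corona (SimpleGraph.pathGraph (m+1)) (⊤ : SimpleGraph (Fin n))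

def blk : Vt m n → Fin (m+1) := Sum.elim id Prod.fst

/-- Vertex enumeration. -/
def iV : Vt m n → ℕ := Sum.elim (fun i => i.val) (fun p => (m+1) + p.1.val * n + p.2.val)

lemma iV_inj : Function.Injective (iV m n) := by
  rintro (a | ⟨a, j⟩) (b | ⟨b, k⟩) h <;>
    simp only [iV, Sum.elim_inl, Sum.elim_inr] at h
  · exact congrArg _ (Fin.ext h)
  · exfalso
    have := a.isLt
    have h2 : (0:ℕ) ≤ b.val * n := Nat.zero_le _
    omega
  · exfalso
    have := b.isLt
    have h2 : (0:ℕ) ≤ a.val * n := Nat.zero_le _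
    omega
  · have hj := j.isLt
    have hk := k.isLt
    have hab : a.val = b.val := by
      rcases Nat.lt_trichotomy a.val b.val with hl | hl | hl
      · exfalso
        have hmul : (a.val + 1) * n ≤ b.val * n := Nat.mul_le_mul_right n hl
        rw [Nat.add_mul, one_mul] at hmul
        omega
      · exact hl
      · exfalso
        have hmul : (b.val + 1) * n ≤ a.val * n := Nat.mul_le_mul_right n hl
        rw [Nat.add_mul, one_mul] at hmul
        omega
    have hjk : j.val = k.val := by
      rw [hab] at h
      omega
    have : (a, j) = (b, k) := by
      rw [Prod.mk.injEq]
      exact ⟨Fin.ext hab, Fin.ext hjk⟩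
    rw [this]

/-- Whether a vertex gets a non-singleton label in the construction. -/
def nsv : Vt m n → Prop := Sum.elim (fun i => i.val % 2 = 0) (fun p => p.1.val % 2 = 1 ∧ p.2.val = 0)

instance : DecidablePred (nsv m n) := by
  rintro (a | p) <;> unfold nsv <;> simp only [Sum.elim_inl, Sum.elim_inr] <;> infer_instance

def Dd : ℕ := 4 ^ ((m+1) + (m+1)*n)

/-- The weak IASI achieving the sparing number. -/
def f0 : Vt m n → Finset ℕ :=
  fun v => if nsv m n v then {4 ^ iV m n v, 4 ^ iV m n v + Dd m n} else {4 ^ iV m n v}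

lemma Dd_pos : 0 < Dd m n := Nat.pow_pos (by norm_num)

lemma f0_mem (v : Vt m n) : 4 ^ iV m n v ∈ f0 m n v := by
  unfold f0; split <;> simp

lemma f0_le (v : Vt m n) : ∀ x ∈ f0 m n v, 4 ^ iV m n v ≤ x := by
  intro x hx
  unfold f0 at hx
  split at hx <;> simp only [Finset.mem_insert, Finset.mem_singleton] at hx
  · rcases hx with rfl | rfl <;> omega
  · omega

lemma f0_card_of_nsv {v : Vt m n} (h : nsv m n v) : (f0 m n v).card = 2 := by
  have hD := Dd_pos m n
  rw [f0, if_pos h, Finset.card_insert_of_notMem (by simp only [Finset.mem_singleton]; omega),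
    Finset.card_singleton]

lemma f0_card_of_not_nsv {v : Vt m n} (h : ¬ nsv m n v) : (f0 m n v).card = 1 := by
  rw [f0, if_neg h]; simp

lemma f0_nonempty (v : Vt m n) : (f0 m n v).Nonempty := ⟨_, f0_mem m n v⟩

lemma f0_inj : Function.Injective (f0 m n) := by
  intro u v h
  have h1 : 4 ^ iV m n u ∈ f0 m n v := h ▸ f0_mem m n u
  have h2 : 4 ^ iV m n v ∈ f0 m n u := h.symm ▸ f0_mem m n v
  have e : (4:ℕ) ^ iV m n u = 4 ^ iV m n v :=
    le_antisymm (f0_le m n u _ h2) (f0_le m n v _ h1)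
  exact iV_inj m n (Nat.pow_right_injective (by norm_num) e)

/-- Adjacency in the corona graph, structural characterization. -/
lemma Gc_adj_inl_inl {a b : Fin (m+1)} :
    (Gc m n).Adj (Sum.inl a) (Sum.inl b) ↔ (a.val + 1 = b.val ∨ b.val + 1 = a.val) :=
  SimpleGraph.pathGraph_adj

lemma Gc_adj_inl_inr {a : Fin (m+1)} {p : Fin (m+1) × Fin n} :
    (Gc m n).Adj (Sum.inl a) (Sum.inr p) ↔ a = p.1 := Iff.rfl

lemma Gc_adj_inr_inl {a : Fin (m+1)} {p : Fin (m+1) × Fin n} :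
    (Gc m n).Adj (Sum.inr p) (Sum.inl a) ↔ a = p.1 := Iff.rfl

lemma Gc_adj_inr_inr {p q : Fin (m+1) × Fin n} :
    (Gc m n).Adj (Sum.inr p) (Sum.inr q) ↔ p.1 = q.1 ∧ p.2 ≠ q.2 := by
  constructor
  · rintro ⟨h1, h2⟩; exact ⟨h1, h2.ne⟩
  · rintro ⟨h1, h2⟩; exact ⟨h1, by simpa using h2⟩

/-- No edge joins two non-singleton vertices of the construction. -/
lemma not_both_nsv {u v : Vt m n} (h : (Gc m n).Adj u v) : ¬ (nsv m n u ∧ nsv m n v) := by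
  rintro ⟨hu, hv⟩
  match u, v with
  | Sum.inl a, Sum.inl b =>
    rw [Gc_adj_inl_inl] at h
    simp only [nsv, Sum.elim_inl] at hu hv
    omega
  | Sum.inl a, Sum.inr p =>
    rw [Gc_adj_inl_inr] at h
    simp only [nsv, Sum.elim_inl, Sum.elim_inr] at hu hv
    rw [h] at hu
    omega
  | Sum.inr p, Sum.inl a =>
    rw [Gc_adj_inr_inl] at h
    simp only [nsv, Sum.elim_inl, Sum.elim_inr] at hu hv
    rw [h] at hv
    omega
  | Sum.inr p, Sum.inr q =>
    rw [Gc_adj_inr_inr] at h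
    simp only [nsv, Sum.elim_inr] at hu hv
    exact h.2 (Fin.ext (by omega))

lemma f0_base_mem {u v : Vt m n} :
    4 ^ iV m n u + 4 ^ iV m n v ∈ f0 m n u + f0 m n v :=
  Finset.add_mem_add (f0_mem m n u) (f0_mem m n v)

lemma f0_base_le {u v : Vt m n} :
    ∀ x ∈ f0 m n u + f0 m n v, 4 ^ iV m n u + 4 ^ iV m n v ≤ x := by
  intro x hx
  rw [Finset.mem_add] at hx
  obtain ⟨a, ha, b, hb, rfl⟩ := hx
  exact Nat.add_le_add (f0_le m n u a ha) (f0_le m n v b hb)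

lemma f0_weakIASI : IsWeakIASI (Gc m n) (f0 m n) := by
  constructor
  · exact f0_inj m n
  · exact f0_nonempty m n
  · -- edge injectivity
    intro e1 he1 e2 he2 heq
    induction e1 using Sym2.ind with
    | _ u1 v1 =>
    induction e2 using Sym2.ind with
    | _ u2 v2 =>
      rw [SimpleGraph.mem_edgeSet] at he1 he2
      have hl1 : edgeLabel (f0 m n) s(u1, v1) = f0 m n u1 + f0 m n v1 := Sym2.lift_mk _ _ _
      have hl2 : edgeLabel (f0 m n) s(u2, v2) = f0 m n u2 + f0 m n v2 := Sym2.lift_mk _ _ _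
      rw [hl1, hl2] at heq
      have hb1 : 4 ^ iV m n u1 + 4 ^ iV m n v1 = 4 ^ iV m n u2 + 4 ^ iV m n v2 := by
        apply le_antisymm
        · exact f0_base_le m n _ (heq ▸ f0_base_mem m n)
        · exact f0_base_le m n _ (heq.symm ▸ f0_base_mem m n)
      have hne1 : iV m n u1 ≠ iV m n v1 := fun h => he1.ne (iV_inj m n h)
      have hne2 : iV m n u2 ≠ iV m n v2 := fun h => he2.ne (iV_inj m n h)
      rcases pow4_sidon hne1 hne2 hb1 with ⟨e1, e2⟩ | ⟨e1, e2⟩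
      · rw [Sym2.eq_iff]
        exact Or.inl ⟨iV_inj m n e1, iV_inj m n e2⟩
      · rw [Sym2.eq_iff]
        exact Or.inr ⟨iV_inj m n e1, iV_inj m n e2⟩
  · -- weak
    intro u v h
    rcases not_and_or.mp (not_both_nsv m n h) with hu | hv
    · have h1 : (f0 m n u).card = 1 := f0_card_of_not_nsv m n hu
      rw [SP.card_add_left h1, h1]
      exact (Nat.max_eq_right (f0_nonempty m n v).card_pos).symm
    · have h1 : (f0 m n v).card = 1 := f0_card_of_not_nsv m n hv
      rw [SP.card_add_right h1, h1]
      exact (Nat.max_eq_left (f0_nonempty m n u).card_pos).symm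

/-! ### Counting mono edges of the construction -/

/-- The canonical family of `n` mono-indexed, pairwise adjacent vertices in block `i`. -/
def psi0 (i : Fin (m+1)) (j : Fin n) : Vt m n :=
  if i.val % 2 = 1 ∧ j.val = 0 then Sum.inl i else Sum.inr (i, j)

def idx (hn : 1 ≤ n) : Vt m n → Fin n := Sum.elim (fun _ => ⟨0, hn⟩) Prod.snd

lemma psi0_not_nsv (i : Fin (m+1)) (j : Fin n) : ¬ nsv m n (psi0 m n i j) := by
  unfold psi0
  split
  · rename_i hc
    simp only [nsv, Sum.elim_inl]
    omega
  · rename_i hc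
    simpa only [nsv, Sum.elim_inr] using hc

lemma psi0_blk (i : Fin (m+1)) (j : Fin n) : blk m n (psi0 m n i j) = i := by
  unfold psi0; split <;> rfl

lemma psi0_idx (hn : 1 ≤ n) (i : Fin (m+1)) (j : Fin n) : idx m n hn (psi0 m n i j) = j := by
  unfold psi0
  split
  · rename_i hc
    exact (Fin.ext hc.2.symm : (⟨0, hn⟩ : Fin n) = j)
  · rfl

lemma psi0_adj {i : Fin (m+1)} {j k : Fin n} (hjk : j ≠ k) :
    (Gc m n).Adj (psi0 m n i j) (psi0 m n i k) := by
  unfold psi0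
  split <;> split
  · rename_i h1 h2
    exact absurd (Fin.ext (h1.2.trans h2.2.symm)) hjk
  · exact (Gc_adj_inl_inr m n).mpr rfl
  · exact (Gc_adj_inr_inl m n).mpr rfl
  · exact (Gc_adj_inr_inr m n).mpr ⟨rfl, hjk⟩

lemma psi0_eq_of_card (hn : 1 ≤ n) {u : Vt m n} (h : (f0 m n u).card = 1) :
    psi0 m n (blk m n u) (idx m n hn u) = u := by
  have hns : ¬ nsv m n u := by
    intro hc
    rw [f0_card_of_nsv m n hc] at h
    omega
  match u with
  | Sum.inl a =>
    simp only [nsv, Sum.elim_inl] at hns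
    have : a.val % 2 = 1 := by omega
    simp [psi0, blk, idx, this]
  | Sum.inr p =>
    simp only [nsv, Sum.elim_inr] at hns
    simp only [psi0, blk, idx, Sum.elim_inr]
    exact if_neg hns

/-- Both endpoints of a mono edge lie in the same block. -/
lemma mono_edge_blk {u v : Vt m n} (h : (Gc m n).Adj u v)
    (hu : (f0 m n u).card = 1) (hv : (f0 m n v).card = 1) : blk m n u = blk m n v := by
  have hnu : ¬ nsv m n u := fun hc => by rw [f0_card_of_nsv m n hc] at hu; omega
  have hnv : ¬ nsv m n v := fun hc => by rw [f0_card_of_nsv m n hc] at hv; omega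
  match u, v with
  | Sum.inl a, Sum.inl b =>
    exfalso
    rw [Gc_adj_inl_inl] at h
    simp only [nsv, Sum.elim_inl] at hnu hnv
    omega
  | Sum.inl a, Sum.inr p => rw [Gc_adj_inl_inr] at h; exact h
  | Sum.inr p, Sum.inl a => rw [Gc_adj_inr_inl] at h; exact h.symm
  | Sum.inr p, Sum.inr q => rw [Gc_adj_inr_inr] at h; exact h.1

lemma mono_edge_idx (hn : 1 ≤ n) {u v : Vt m n} (h : (Gc m n).Adj u v)
    (hu : (f0 m n u).card = 1) (hv : (f0 m n v).card = 1) :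
    idx m n hn u ≠ idx m n hn v := by
  intro he
  have e1 := psi0_eq_of_card m n hn hu
  have e2 := psi0_eq_of_card m n hn hv
  rw [mono_edge_blk m n h hu hv, he] at e1
  exact (Gc m n).ne_of_adj h (e1.symm.trans e2)

end SP

open SP in
/-- Sparing number of the corona `P_m ⊙ K_n` of a path and a complete graph. -/
theorem sparing_corona_path_complete (m n : ℕ) (hm : 1 ≤ m) (hn : 1 ≤ n) :
    2 * sparingNumber (corona (SimpleGraph.pathGraph (m + 1)) (⊤ : SimpleGraph (Fin n)))
      = n * (n - 1) * (m + 1) := by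
  classical
  set G := corona (SimpleGraph.pathGraph (m + 1)) (⊤ : SimpleGraph (Fin n)) with hG
  have hGc : G = Gc m n := rfl
  -- arithmetic: n*n - n = n*(n-1)
  have harith : n * n - n = n * (n - 1) := by
    cases n with
    | zero => simp
    | succ k => rw [Nat.succ_sub_one, Nat.mul_succ]; omega
  -- the domain finset for counting
  set dom : Finset (Fin (m+1) × (Fin n × Fin n)) :=
    Finset.univ ×ˢ (Finset.univ : Finset (Fin n)).offDiag with hdom
  have hdomcard : dom.card = (m+1) * (n * (n-1)) := by
    rw [hdom, Finset.card_product, Finset.offDiag_card]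
    simp [harith]
  -- pairs finset for a labeling f
  have key : ∀ f : SP.Vt m n → Finset ℕ,
      2 * monoCount G f = (Finset.univ.filter
        (fun p : SP.Vt m n × SP.Vt m n => G.Adj p.1 p.2 ∧ (f p.1 + f p.2).card = 1)).card := by
    intro f
    rw [SP.two_mul_monoCount G f]
    rw [show {p : SP.Vt m n × SP.Vt m n | G.Adj p.1 p.2 ∧ (f p.1 + f p.2).card = 1}
        = ↑(Finset.univ.filter
          (fun p : SP.Vt m n × SP.Vt m n => G.Adj p.1 p.2 ∧ (f p.1 + f p.2).card = 1)) by
      ext p; simp]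
    exact Set.ncard_coe_finset _
  -- upper bound: the construction has exactly (m+1)*n*(n-1) ordered mono pairs
  have hupper : 2 * monoCount G (f0 m n) = (m+1) * (n * (n-1)) := by
    rw [key (f0 m n), ← hdomcard]
    symm
    apply Finset.card_bij' (fun q _ => (psi0 m n q.1 q.2.1, psi0 m n q.1 q.2.2))
      (fun p _ => (blk m n p.1, (idx m n hn p.1, idx m n hn p.2)))
    · rintro ⟨i, j, k⟩ hq
      simp only [hdom, Finset.mem_product, Finset.mem_offDiag] at hq
      obtain ⟨-, -, -, hjk⟩ := hq
      simp only [Finset.mem_filter, Finset.mem_univ, true_and]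
      refine ⟨psi0_adj m n hjk, ?_⟩
      rw [SP.card_add_left (f0_card_of_not_nsv m n (psi0_not_nsv m n i j))]
      exact f0_card_of_not_nsv m n (psi0_not_nsv m n i k)
    · rintro ⟨u, v⟩ hp
      simp only [Finset.mem_filter, Finset.mem_univ, true_and] at hp
      obtain ⟨hadj, hmono⟩ := hp
      obtain ⟨hu, hv⟩ := SP.mono_of_mono (f0_nonempty m n u) (f0_nonempty m n v) hmono
      simp only [hdom, Finset.mem_product, Finset.mem_offDiag, Finset.mem_univ, true_and]
      exact mono_edge_idx m n hn hadj hu hv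
    · rintro ⟨i, j, k⟩ hq
      simp only [hdom, Finset.mem_product, Finset.mem_offDiag] at hq
      simp [psi0_blk, psi0_idx]
    · rintro ⟨u, v⟩ hp
      simp only [Finset.mem_filter, Finset.mem_univ, true_and] at hp
      obtain ⟨hadj, hmono⟩ := hp
      obtain ⟨hu, hv⟩ := SP.mono_of_mono (f0_nonempty m n u) (f0_nonempty m n v) hmono
      have hb := mono_edge_blk m n hadj hu hv
      simp only
      rw [psi0_eq_of_card m n hn hu, hb, psi0_eq_of_card m n hn hv]
  -- lower bound
  have hlower : ∀ f : SP.Vt m n → Finset ℕ, IsWeakIASI G f →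
      (m+1) * (n * (n-1)) ≤ 2 * monoCount G f := by
    intro f hf
    rw [key f, ← hdomcard]
    -- in each block, choose n mono-indexed pairwise adjacent vertices
    have hpsi : ∀ i : Fin (m+1), ∃ ψ : Fin n → SP.Vt m n, Function.Injective ψ ∧
        (∀ j, blk m n (ψ j) = i) ∧ (∀ j, (f (ψ j)).card = 1) ∧
        (∀ j k, j ≠ k → G.Adj (ψ j) (ψ k)) := by
      intro i
      by_cases h : ∃ j₀ : Fin n, (f (Sum.inr (i, j₀))).card ≠ 1
      · obtain ⟨j₀, hj₀⟩ := h
        refine ⟨fun j => if j = j₀ then Sum.inl i else Sum.inr (i, j), ?_, ?_, ?_, ?_⟩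
        · intro a b hab
          dsimp only at hab
          by_cases ha : a = j₀ <;> by_cases hb : b = j₀
          · rw [ha, hb]
          · rw [if_pos ha, if_neg hb] at hab
            exact absurd hab (by simp)
          · rw [if_neg ha, if_pos hb] at hab
            exact absurd hab (by simp)
          · rw [if_neg ha, if_neg hb] at hab
            exact (Prod.ext_iff.mp (Sum.inr_injective hab)).2
        · intro j
          by_cases hj : j = j₀ <;> simp [hj, blk]
        · intro j
          dsimp only
          by_cases hj : j = j₀
          · rw [if_pos hj]
            rcases SP.one_singleton hf (show G.Adj (Sum.inl i) (Sum.inr (i, j₀)) from rfl)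
              with h1 | h1
            · exact h1
            · exact absurd h1 hj₀
          · rw [if_neg hj]
            rcases SP.one_singleton hf
              ((Gc_adj_inr_inr m n).mpr ⟨rfl, show j ≠ j₀ from hj⟩ :
                G.Adj (Sum.inr (i, j)) (Sum.inr (i, j₀))) with h1 | h1
            · exact h1
            · exact absurd h1 hj₀
        · intro j k hjk
          dsimp only
          by_cases hj : j = j₀ <;> by_cases hk : k = j₀
          · exact absurd (hj.trans hk.symm) hjk
          · rw [if_pos hj, if_neg hk]
            exact (Gc_adj_inl_inr m n).mpr rfl
          · rw [if_neg hj, if_pos hk]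
            exact (Gc_adj_inr_inl m n).mpr rfl
          · rw [if_neg hj, if_neg hk]
            exact (Gc_adj_inr_inr m n).mpr ⟨rfl, hjk⟩
      · push_neg at h
        refine ⟨fun j => Sum.inr (i, j), ?_, fun j => rfl, h, ?_⟩
        · intro a b hab
          exact (Prod.ext_iff.mp (Sum.inr_injective hab)).2
        · intro j k hjk
          exact (Gc_adj_inr_inr m n).mpr ⟨rfl, hjk⟩
    choose ψ hinj hblk hcard hadj using hpsi
    apply Finset.card_le_card_of_injOn (fun q => (ψ q.1 q.2.1, ψ q.1 q.2.2))
    · rintro ⟨i, j, k⟩ hq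
      simp only [hdom, Finset.mem_coe, Finset.mem_product, Finset.mem_offDiag] at hq
      obtain ⟨-, -, -, hjk⟩ := hq
      simp only [Finset.mem_coe, Finset.mem_filter, Finset.mem_univ, true_and]
      refine ⟨hadj i j k hjk, ?_⟩
      rw [SP.card_add_left (hcard i j), hcard i k]
    · rintro ⟨i1, j1, k1⟩ h1 ⟨i2, j2, k2⟩ h2 he
      simp only [Prod.mk.injEq] at he
      obtain ⟨e1, e2⟩ := he
      have hi : i1 = i2 := by
        have := hblk i1 j1
        rw [e1, hblk i2 j2] at this
        exact this.symm
      subst hi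
      exact Prod.ext rfl (Prod.ext (hinj i1 e1) (hinj i1 e2))
  -- conclude
  obtain ⟨k₀, hk₀⟩ : ∃ k₀, monoCount G (f0 m n) = k₀ := ⟨_, rfl⟩
  have hk₀mem : k₀ ∈ {k | ∃ f, IsWeakIASI G f ∧ monoCount G f = k} :=
    ⟨f0 m n, f0_weakIASI m n, hk₀⟩
  have h2k₀ : 2 * k₀ = (m+1) * (n * (n-1)) := by rw [← hk₀]; exact hupper
  have hsinf : sparingNumber G = k₀ := by
    apply le_antisymm
    · exact Nat.sInf_le hk₀mem
    · apply le_csInf ⟨k₀, hk₀mem⟩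
      rintro k ⟨f, hf, rfl⟩
      have := hlower f hf
      omega
  rw [hsinf, h2k₀]
  ring
end
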